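/- Let C ∈ ℂ^{r1×…×rd} be a Tucker core and U_j ∈ ℂ^{n_j×r_j} have orthonormal columns, Y = C ×_1 U_1 ⋯ ×_d U_d. Define P(Y)Z = Z ×_{j=1}^d U_j U_j* + ∑_{i=1}^d Z (×_{j≠i} U_j U_j*) ×_i (I − U_i U_i*). Then for any index set 𝓘 ⊆ {1,…,d} with |𝓘| ≥ 2 and any matrices Ũ_i with Ũ_i* U_i = 0 for i ∈ 𝓘, the tensor (P(Y)Z) (×_{j∉𝓘} U_j*) (×_{i∈𝓘} Ũ_i*) = 0. -/
import Mathlib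

open Matrix Finset

/-- Simultaneous mode products `Z ×_1 M 1 ⋯ ×_d M d` of a `d`-mode tensor with a family
of matrices (mode-`i` product with `M i` in every mode `i`). -/
noncomputable def multiProd {d : ℕ} {m n : Fin d → ℕ}
    (M : ∀ i, Matrix (Fin (m i)) (Fin (n i)) ℂ)
    (Z : (∀ i, Fin (n i)) → ℂ) : (∀ i, Fin (m i)) → ℂ :=
  fun k => ∑ j : ∀ i, Fin (n i), (∏ i, M i (k i) (j i)) * Z j

lemma multiProd_comp {d : ℕ} {m n p : Fin d → ℕ}
    (W : ∀ i, Matrix (Fin (m i)) (Fin (n i)) ℂ)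
    (M : ∀ i, Matrix (Fin (n i)) (Fin (p i)) ℂ)
    (Z : (∀ i, Fin (p i)) → ℂ) :
    multiProd W (multiProd M Z) = multiProd (fun i => W i * M i) Z := by
  funext k
  simp only [multiProd, Finset.mul_sum, Matrix.mul_apply]
  rw [Finset.sum_comm]
  refine Finset.sum_congr rfl fun l _ => ?_
  simp_rw [← mul_assoc, ← Finset.sum_mul, ← Finset.prod_mul_distrib]
  congr 1
  rw [Fintype.prod_sum]

lemma multiProd_zero {d : ℕ} {m n : Fin d → ℕ}
    (M : ∀ i, Matrix (Fin (m i)) (Fin (n i)) ℂ)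
    (Z : (∀ i, Fin (n i)) → ℂ) (i0 : Fin d) (h : M i0 = 0) :
    multiProd M Z = 0 := by
  funext k
  simp only [multiProd, Pi.zero_apply]
  refine Finset.sum_eq_zero fun j _ => ?_
  rw [Finset.prod_eq_zero (Finset.mem_univ i0) (by simp [h]), zero_mul]

lemma multiProd_add {d : ℕ} {m n : Fin d → ℕ}
    (W : ∀ i, Matrix (Fin (m i)) (Fin (n i)) ℂ)
    (A B : (∀ i, Fin (n i)) → ℂ) :
    multiProd W (A + B) = multiProd W A + multiProd W B := by
  funext k
  simp [multiProd, mul_add, Finset.sum_add_distrib]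

lemma multiProd_sum {d : ℕ} {m n : Fin d → ℕ} {ι : Type*} (t : Finset ι)
    (W : ∀ i, Matrix (Fin (m i)) (Fin (n i)) ℂ)
    (A : ι → (∀ i, Fin (n i)) → ℂ) :
    multiProd W (∑ x ∈ t, A x) = ∑ x ∈ t, multiProd W (A x) := by
  funext k
  simp [multiProd, Finset.mul_sum, Finset.sum_apply]
  rw [Finset.sum_comm]

/-- key vanishing property of the Tucker tangent-space projection
`P(Y)Z = Z ×_j U_jU_j* + ∑_i Z (×_{j≠i} U_jU_j*) ×_i (I − U_iU_i*)` (Koch–Lubich):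
contracting it in at least two modes `i ∈ 𝓘` with matrices `W i = Ũ_i*` whose ranges are
orthogonal to `U_i` (and with arbitrary matrices, e.g. `U_j*`, in the remaining modes)
yields the zero tensor. -/
theorem stmt5 {d : ℕ} {n r s : Fin d → ℕ}
    (U : ∀ i, Matrix (Fin (n i)) (Fin (r i)) ℂ)
    (hU : ∀ i, (U i)ᴴ * U i = 1)
    (C : (∀ i, Fin (r i)) → ℂ)
    (Z : (∀ i, Fin (n i)) → ℂ)
    (Y : (∀ i, Fin (n i)) → ℂ) (hY : Y = multiProd U C)
    (PZ : (∀ i, Fin (n i)) → ℂ)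
    (hPZ : PZ = multiProd (fun j => U j * (U j)ᴴ) Z
      + ∑ i : Fin d,
          multiProd (fun j => if j = i then 1 - U j * (U j)ᴴ else U j * (U j)ᴴ) Z)
    (I : Finset (Fin d)) (hI : 2 ≤ I.card)
    (W : ∀ i, Matrix (Fin (s i)) (Fin (n i)) ℂ)
    (hW : ∀ i ∈ I, W i * U i = 0) :
    multiProd W PZ = 0 := by
  subst hPZ
  rw [multiProd_add, multiProd_sum]
  obtain ⟨i1, hi1⟩ := Finset.card_pos.mp (by omega : 0 < I.card)
  have key : ∀ i ∈ I, W i * (U i * (U i)ᴴ) = 0 := fun i hi => by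
    rw [← Matrix.mul_assoc, hW i hi, Matrix.zero_mul]
  rw [multiProd_comp, multiProd_zero _ _ i1 (key i1 hi1)]
  rw [zero_add]
  refine Finset.sum_eq_zero fun i _ => ?_
  -- find j ∈ I with j ≠ i
  obtain ⟨j, hj, hji⟩ : ∃ j ∈ I, j ≠ i := by
    by_contra h
    push_neg at h
    have : I ⊆ {i} := fun x hx => Finset.mem_singleton.mpr (h x hx)
    have := Finset.card_le_card this
    simp at this; omega
  rw [multiProd_comp]
  refine multiProd_zero _ _ j ?_
  simp [if_neg hji, key j hj]
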